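/- Every real polynomial q(u,v,t) that is a sum of squares of polynomials and satisfies q(u,v,t) = q(v,u,t) for all u,v,t can be written as s1(u,v,t) + (u−v)^2 · s2(u,v,t), where s1 and s2 are sums of squares of polynomials invariant under swapping u and v. -/

import Mathlib

open MvPolynomial

private noncomputable abbrev P3 := MvPolynomial (Fin 3) ℝ

private noncomputable def σswap : Fin 3 ≃ Fin 3 := Equiv.swap 0 1

private noncomputable def sR : P3 →ₐ[ℝ] P3 := rename σswap

private lemma sR_sR (p : P3) : sR (sR p) = p := by
  simp only [sR]
  rw [rename_rename]
  rw [show (⇑σswap ∘ ⇑σswap) = id from funext fun x => Equiv.swap_apply_self _ _ _]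
  exact DFunLike.congr_fun rename_id p

private lemma key_dvd (p : P3) : (X 0 - X 1 : P3) ∣ (p - sR p) := by
  induction p using MvPolynomial.induction_on with
  | C a => simp [sR]
  | add p q hp hq =>
      have h : (p + q) - sR (p + q) = (p - sR p) + (q - sR q) := by
        rw [map_add]; ring
      rw [h]; exact dvd_add hp hq
  | mul_X p n hp =>
      have h1 : (X 0 - X 1 : P3) ∣ (X n - X (σswap n)) := by
        rcases eq_or_ne n 0 with rfl | h0
        · rw [show σswap 0 = 1 by decide]
        · rcases eq_or_ne n 1 with rfl | h1
          · rw [show σswap 1 = 0 by decide]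
            exact ⟨-1, by ring⟩
          · rw [show σswap n = n from Equiv.swap_apply_of_ne_of_ne h0 h1, sub_self]
            exact dvd_zero _
      have hx : sR (X n) = X (σswap n) := rename_X _ _
      have heq : p * X n - sR (p * X n) =
          (p - sR p) * X n + sR p * (X n - X (σswap n)) := by
        rw [map_mul, hx]; ring
      rw [heq]
      exact dvd_add (hp.mul_right _) (h1.mul_left _)

private lemma X01_ne : (X 0 - X 1 : P3) ≠ 0 := by
  intro h
  have := sub_eq_zero.mp h
  exact absurd (X_injective this) (by decide)

private lemma sos_multiset {q : P3} (h : IsSumSq q) :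
    ∃ m : Multiset P3, q = (m.map (· ^ 2)).sum := by
  induction h with
  | zero => exact ⟨0, by simp⟩
  | sq_add a _ ih =>
      obtain ⟨m, hm⟩ := ih
      exact ⟨a ::ₘ m, by simp [hm, sq]⟩

theorem stmt_3 (q : MvPolynomial (Fin 3) ℝ) (hsos : IsSumSq q)
    (hsym : rename (Equiv.swap (0 : Fin 3) 1) q = q) :
    ∃ m₁ m₂ : Multiset (MvPolynomial (Fin 3) ℝ),
      (∀ p ∈ m₁, rename (Equiv.swap (0 : Fin 3) 1) p = p) ∧
      (∀ p ∈ m₂, rename (Equiv.swap (0 : Fin 3) 1) p = p) ∧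
      q = (m₁.map (· ^ 2)).sum + (X 0 - X 1) ^ 2 * (m₂.map (· ^ 2)).sum := by
  classical
  obtain ⟨m, hm⟩ := sos_multiset hsos
  set d : P3 := X 0 - X 1 with hd
  set e : P3 → P3 := fun p => C (2⁻¹ : ℝ) * (p + sR p) with he
  set o : P3 → P3 := fun p => C (2⁻¹ : ℝ) * (p - sR p) with ho
  have hodvd : ∀ p : P3, d ∣ o p := fun p => Dvd.dvd.mul_left (key_dvd p) _
  set r : P3 → P3 := fun p => (hodvd p).choose with hr
  have hor : ∀ p, o p = d * r p := fun p => (hodvd p).choose_spec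
  have hsC : sR (C (2⁻¹ : ℝ)) = C (2⁻¹ : ℝ) := rename_C _ _
  have hse : ∀ p, sR (e p) = e p := by
    intro p
    simp only [he, map_mul, map_add, sR_sR, hsC]
    ring
  have hso : ∀ p, sR (o p) = - o p := by
    intro p
    simp only [ho, map_mul, map_sub, sR_sR, hsC]
    ring
  have hsd : sR d = -d := by
    simp only [hd, map_sub, sR, rename_X, σswap, Equiv.swap_apply_left,
      Equiv.swap_apply_right]
    ring
  have hsr : ∀ p, sR (r p) = r p := by
    intro p
    have h2 : sR (o p) = sR d * sR (r p) := by rw [hor p, map_mul]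
    rw [hso, hsd, hor p, neg_mul] at h2
    have h3 := neg_injective h2
    exact mul_left_cancel₀ X01_ne h3.symm
  refine ⟨m.map e, m.map r, ?_, ?_, ?_⟩
  · intro p hp
    obtain ⟨a, _, rfl⟩ := Multiset.mem_map.mp hp
    exact hse a
  · intro p hp
    obtain ⟨a, _, rfl⟩ := Multiset.mem_map.mp hp
    exact hsr a
  · have hC : (C (2⁻¹:ℝ) : P3) ^ 2 * 2 = C (2⁻¹:ℝ) := by
      rw [← C_pow, show (2:P3) = C 2 from (map_ofNat C 2).symm, ← C_mul]
      norm_num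
    have step1 : ((m.map e).map (· ^ 2)).sum + d ^ 2 * ((m.map r).map (· ^ 2)).sum
        = (m.map (fun p => (e p) ^ 2 + (o p) ^ 2)).sum := by
      rw [Multiset.map_map, Multiset.map_map]
      have h4 : d ^ 2 * (m.map ((· ^ 2) ∘ r)).sum
          = (m.map (fun p => (o p) ^ 2)).sum := by
        rw [← Multiset.sum_map_mul_left]
        apply congrArg
        apply Multiset.map_congr rfl
        intro p _
        simp only [Function.comp_apply]
        rw [hor p]; ring
      rw [h4, ← Multiset.sum_map_add]
      apply congrArg
      apply Multiset.map_congr rfl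
      intro p _
      rfl
    have step2 : ∀ p : P3, (e p) ^ 2 + (o p) ^ 2 = C (2⁻¹:ℝ) * (p ^ 2 + (sR p) ^ 2) := by
      intro p
      simp only [he, ho]
      linear_combination (p ^ 2 + (sR p) ^ 2) * hC
    have step3 : (m.map (fun p => (e p) ^ 2 + (o p) ^ 2)).sum
        = C (2⁻¹:ℝ) * ((m.map (· ^ 2)).sum + (m.map (fun p => (sR p) ^ 2)).sum) := by
      rw [← Multiset.sum_map_add, ← Multiset.sum_map_mul_left]
      apply congrArg
      apply Multiset.map_congr rfl
      intro p _
      rw [step2 p]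
    have hsq : (m.map (fun p => (sR p) ^ 2)).sum = q := by
      have h5 : (m.map (fun p => (sR p) ^ 2)).sum = sR ((m.map (· ^ 2)).sum) := by
        rw [map_multiset_sum, Multiset.map_map]
        apply congrArg
        apply Multiset.map_congr rfl
        intro p _
        simp [map_pow]
      rw [h5, ← hm]
      exact hsym
    rw [step1, step3, hsq, ← hm]
    have h6 : (C (2⁻¹:ℝ) : P3) * 2 = 1 := by
      rw [show (2:P3) = C 2 from (map_ofNat C 2).symm, ← C_mul]; norm_num
    linear_combination (-q) * h6
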